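/- Let (X, c) and (Y, d) be quantum Markov chains on ℂ^d. A relation R ⊆ X × Y is an AM-bisimulation between (X, c) and (Y, d) if and only if for every (a, b) ∈ R there exists a finitely supported function m : X × Y → Matrix (Fin d) (Fin d) ℂ such that: every value m x y is positive semidefinite; m x y ≠ 0 implies (x, y) ∈ R; for every x : X, ∑ y, m x y = c a x; and for every y : Y, ∑ x, m x y = d b y. -/
import Mathlib


open Matrix ComplexOrder

/-- An effect on ℂ^d: a positive semidefinite matrix below the identity. -/
def IsEffect {d : ℕ} (L : Matrix (Fin d) (Fin d) ℂ) : Prop :=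
  L.PosSemidef ∧ (1 - L).PosSemidef

/-- A density operator on ℂ^d: a positive semidefinite matrix of trace one. -/
def IsDensity {d : ℕ} (ρ : Matrix (Fin d) (Fin d) ℂ) : Prop :=
  ρ.PosSemidef ∧ ρ.trace = 1

/-- Pushforward of a (finitely supported) weight function along `f`. -/
noncomputable def push {M : Type*} [AddCommMonoid M] {X Z : Type} (f : X → Z)
    (Δ : X → M) : Z → M :=
  fun z => ∑ᶠ (x : X) (_ : f x = z), Δ x

/-- A quantum (sub)distribution on `X` with weights on ℂ^d. -/
def IsQDist {d : ℕ} {X : Type} (Δ : X → Matrix (Fin d) (Fin d) ℂ) : Prop :=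
  (Function.support Δ).Finite ∧ (∀ x, (Δ x).PosSemidef) ∧ (1 - ∑ᶠ x, Δ x).PosSemidef

/-- A quantum Markov chain on ℂ^d. -/
def IsQMC {d : ℕ} {X : Type} (c : X → X → Matrix (Fin d) (Fin d) ℂ) : Prop :=
  ∀ x, IsQDist (c x)

/-- A homomorphism of quantum Markov chains. -/
def IsQHom {d : ℕ} {X Z : Type} (c : X → X → Matrix (Fin d) (Fin d) ℂ)
    (e : Z → Z → Matrix (Fin d) (Fin d) ℂ) (f : X → Z) : Prop :=
  ∀ x, e (f x) = push f (c x)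

/-- Kernel bisimilarity of states of two quantum Markov chains. -/
def QKernelBisim {d : ℕ} {X Y : Type} (c : X → X → Matrix (Fin d) (Fin d) ℂ)
    (dY : Y → Y → Matrix (Fin d) (Fin d) ℂ) (x : X) (y : Y) : Prop :=
  ∃ (Z : Type) (e : Z → Z → Matrix (Fin d) (Fin d) ℂ) (m₁ : X → Z) (m₂ : Y → Z),
    IsQMC e ∧ IsQHom c e m₁ ∧ IsQHom dY e m₂ ∧ m₁ x = m₂ y

/-- `R ⊆ X × Y` is an AM-bisimulation between the quantum Markov chains
`(X, c)` and `(Y, d)` if there is a quantum Markov chain structure on `R`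
making the two projections homomorphisms. -/
def IsQAMBisim {d : ℕ} {X Y : Type} (c : X → X → Matrix (Fin d) (Fin d) ℂ)
    (dY : Y → Y → Matrix (Fin d) (Fin d) ℂ) (R : Set (X × Y)) : Prop :=
  ∃ e : R → R → Matrix (Fin d) (Fin d) ℂ, IsQMC e ∧
    (∀ r : R, c r.1.1 = push (fun r' : R => r'.1.1) (e r)) ∧
    (∀ r : R, dY r.1.2 = push (fun r' : R => r'.1.2) (e r))

/-- AM-bisimilarity of states of two quantum Markov chains. -/
def QAMBisimilar {d : ℕ} {X Y : Type} (c : X → X → Matrix (Fin d) (Fin d) ℂ)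
    (dY : Y → Y → Matrix (Fin d) (Fin d) ℂ) (x : X) (y : Y) : Prop :=
  ∃ R : Set (X × Y), IsQAMBisim c dY R ∧ (x, y) ∈ R

section helpers

variable {M : Type*} [AddCommMonoid M] {X Y Z W : Type}

lemma push_apply (f : X → Z) (Δ : X → M) (z : Z) :
    push f Δ z = ∑ᶠ x ∈ {x | f x = z}, Δ x := rfl

lemma push_support (f : X → Z) (Δ : X → M) :
    Function.support (push f Δ) ⊆ f '' Function.support Δ := by
  intro z hz
  by_contra h
  apply hz
  refine finsum_eq_zero_of_forall_eq_zero fun x => ?_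
  classical
  rw [finsum_eq_if]
  split
  · next hfx =>
      by_contra hΔx
      exact h ⟨x, hΔx, hfx⟩
  · rfl

lemma fiber_sum (f : X → Z) (Δ : X → M) (hΔ : (Function.support Δ).Finite) (t : Set Z) :
    ∑ᶠ z ∈ t, push f Δ z = ∑ᶠ x ∈ f ⁻¹' t, Δ x := by
  classical
  set s := hΔ.toFinset with hsdef
  have hR : ∑ᶠ x ∈ f ⁻¹' t, Δ x = ∑ x ∈ s.filter (fun x => f x ∈ t), Δ x := by
    apply finsum_mem_eq_sum_of_inter_support_eq
    ext x
    simp only [Set.mem_inter_iff, Set.mem_preimage, Finset.coe_filter, Set.mem_setOf_eq,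
      Function.mem_support, hsdef, Set.Finite.mem_toFinset]
    tauto
  have hpz : ∀ z, push f Δ z = ∑ x ∈ s.filter (fun x => f x = z), Δ x := by
    intro z
    rw [push_apply]
    apply finsum_mem_eq_sum_of_inter_support_eq
    ext x
    simp only [Set.mem_inter_iff, Set.mem_setOf_eq, Finset.coe_filter,
      Function.mem_support, hsdef, Set.Finite.mem_toFinset]
    tauto
  have hL : ∑ᶠ z ∈ t, push f Δ z
      = ∑ z ∈ (s.image f).filter (fun z => z ∈ t), push f Δ z := by
    apply finsum_mem_eq_sum_of_inter_support_eq
    ext z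
    simp only [Set.mem_inter_iff, Finset.coe_filter, Set.mem_setOf_eq, Finset.mem_image,
      Function.mem_support]
    constructor
    · rintro ⟨hzt, hz⟩
      obtain ⟨x, hx, hfx⟩ := push_support f Δ hz
      exact ⟨⟨⟨x, by simpa [hsdef] using hx, hfx⟩, hzt⟩, hz⟩
    · tauto
  rw [hL, hR]
  have hstep : ∀ z ∈ (s.image f).filter (fun z => z ∈ t),
      push f Δ z = ∑ x ∈ (s.filter (fun x => f x ∈ t)).filter (fun x => f x = z), Δ x := by
    intro z hz
    rw [hpz z]
    congr 1
    ext x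
    simp only [Finset.mem_filter]
    constructor
    · rintro ⟨hxs, hfx⟩
      exact ⟨⟨hxs, hfx ▸ (Finset.mem_filter.mp hz).2⟩, hfx⟩
    · tauto
  rw [Finset.sum_congr rfl hstep]
  apply Finset.sum_fiberwise_of_maps_to
  intro x hx
  simp only [Finset.mem_filter] at hx ⊢
  exact ⟨Finset.mem_image_of_mem f hx.1, hx.2⟩

lemma finsum_push (f : X → Z) (Δ : X → M) (hΔ : (Function.support Δ).Finite) :
    ∑ᶠ z, push f Δ z = ∑ᶠ x, Δ x := by
  rw [← finsum_mem_univ (push f Δ), fiber_sum f Δ hΔ, Set.preimage_univ, finsum_mem_univ]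

lemma push_comp (f : X → Z) (g : Z → W) (Δ : X → M) (hΔ : (Function.support Δ).Finite) :
    push g (push f Δ) = push (fun x => g (f x)) Δ := by
  funext w
  rw [push_apply, push_apply]
  have h1 : {z | g z = w} = g ⁻¹' {w} := rfl
  have h2 : {x | g (f x) = w} = f ⁻¹' (g ⁻¹' {w}) := rfl
  rw [h1, h2, fiber_sum f Δ hΔ]

lemma slice_fst (m : X × Y → M) (x : X) :
    ∑ᶠ y, m (x, y) = push Prod.fst m x := by
  have h1 : Set.InjOn (fun y : Y => (x, y)) Set.univ := fun a _ b _ h => by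
    simpa using congrArg Prod.snd h
  have himg : (fun y : Y => (x, y)) '' Set.univ = {p : X × Y | p.1 = x} := by
    ext ⟨a, b⟩
    constructor
    · rintro ⟨y, -, h⟩
      simp only at h
      rw [← h]; rfl
    · rintro h; exact ⟨b, trivial, by cases h; rfl⟩
  rw [push_apply, ← finsum_mem_univ (fun y => m (x, y)), ← finsum_mem_image h1, himg]

lemma slice_snd (m : X × Y → M) (y : Y) :
    ∑ᶠ x, m (x, y) = push Prod.snd m y := by
  have h1 : Set.InjOn (fun x : X => (x, y)) Set.univ := fun a _ b _ h => by
    simpa using congrArg Prod.fst h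
  have himg : (fun x : X => (x, y)) '' Set.univ = {p : X × Y | p.2 = y} := by
    ext ⟨a, b⟩
    constructor
    · rintro ⟨x, -, h⟩
      simp only at h
      rw [← h]; rfl
    · rintro h; exact ⟨a, trivial, by cases h; rfl⟩
  rw [push_apply, ← finsum_mem_univ (fun x => m (x, y)), ← finsum_mem_image h1, himg]

end helpers

section psd

variable {d : ℕ}

lemma psd_finsum {ι : Type} (f : ι → Matrix (Fin d) (Fin d) ℂ)
    (h : ∀ i, (f i).PosSemidef) : (∑ᶠ i, f i).PosSemidef := by
  by_cases hf : (Function.support f).Finite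
  · rw [finsum_eq_sum f hf]
    exact Finset.sum_induction f _ (fun a b ha hb => ha.add hb) Matrix.PosSemidef.zero
      (fun i _ => h i)
  · rw [finsum_of_infinite_support hf]
    exact Matrix.PosSemidef.zero

lemma psd_push {X Z : Type} (f : X → Z) (Δ : X → Matrix (Fin d) (Fin d) ℂ)
    (h : ∀ x, (Δ x).PosSemidef) (z : Z) : (push f Δ z).PosSemidef := by
  refine psd_finsum _ fun x => ?_
  classical
  rw [finsum_eq_if]
  split <;> simp [h x, Matrix.PosSemidef.zero]

end psd


/-- Matrix characterization of AM-bisimulations between quantum Markov chains: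
`R` is an AM-bisimulation iff every pair in `R` admits a finitely supported
matrix-weighted coupling with positive semidefinite entries supported on `R`
whose marginals are the two given distributions. -/
theorem stmt16 (d : ℕ) {X Y : Type} (c : X → X → Matrix (Fin d) (Fin d) ℂ)
    (dY : Y → Y → Matrix (Fin d) (Fin d) ℂ)
    (hc : IsQMC c) (hd : IsQMC dY) (R : Set (X × Y)) :
    IsQAMBisim c dY R ↔
      ∀ ab ∈ R, ∃ m : X × Y → Matrix (Fin d) (Fin d) ℂ,
        (Function.support m).Finite ∧
        (∀ x y, (m (x, y)).PosSemidef) ∧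
        (∀ x y, m (x, y) ≠ 0 → (x, y) ∈ R) ∧
        (∀ x : X, ∑ᶠ y : Y, m (x, y) = c ab.1 x) ∧
        (∀ y : Y, ∑ᶠ x : X, m (x, y) = dY ab.2 y) := by
  classical
  constructor
  · rintro ⟨e, he, h1, h2⟩ ab hab
    set r : R := ⟨ab, hab⟩ with hr
    obtain ⟨hfin, hpsd, -⟩ := he r
    refine ⟨push (fun r' : R => r'.1) (e r), ?_, ?_, ?_, ?_, ?_⟩
    · exact (hfin.image _).subset (push_support _ _)
    · intro x y
      exact psd_push _ _ hpsd _
    · intro x y hne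
      by_contra hR
      apply hne
      show (∑ᶠ (r' : R) (_ : (r' : X × Y) = (x, y)), e r r') = 0
      refine finsum_eq_zero_of_forall_eq_zero fun r' => ?_
      rw [finsum_eq_if]
      split
      · next h' => exact absurd (h' ▸ r'.2) hR
      · rfl
    · intro x
      rw [slice_fst, push_comp _ _ _ hfin]
      exact (congrFun (h1 r) x).symm
    · intro y
      rw [slice_snd, push_comp _ _ _ hfin]
      exact (congrFun (h2 r) y).symm
  · intro h
    choose m hfin hpsd hsupp hmx hmy using fun r : R => h r.1 r.2
    have hsupp' : ∀ r : R, Function.support (m r) ⊆ R := by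
      intro r p hp
      have := hsupp r p.1 p.2 (by rwa [Prod.mk.eta])
      rwa [Prod.mk.eta] at this
    have hefin : ∀ r : R, (Function.support (fun r' : R => m r r'.1)).Finite := by
      intro r
      have hs : Function.support (fun r' : R => m r r'.1)
          = Subtype.val ⁻¹' Function.support (m r) := rfl
      rw [hs]
      exact (hfin r).preimage Subtype.val_injective.injOn
    have hpush : ∀ r : R,
        push (fun r' : R => (r' : X × Y)) (fun r' : R => m r r'.1) = m r := by
      intro r
      funext p
      by_cases hp : p ∈ R
      · rw [push_apply]
        have hset : {r' : R | (r' : X × Y) = p} = {(⟨p, hp⟩ : R)} := by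
          ext r'
          exact ⟨fun h' => Subtype.ext h', fun h' => by rw [h']; rfl⟩
        rw [hset, finsum_mem_singleton]
      · have h0 : m r p = 0 := by
          by_contra h0
          exact hp (hsupp' r h0)
        rw [h0]
        refine finsum_eq_zero_of_forall_eq_zero fun r' => ?_
        rw [finsum_eq_if]
        split
        · next h' => exact absurd (h' ▸ r'.2) hp
        · rfl
    have hcomp1 : ∀ r : R, push (fun r' : R => r'.1.1) (fun r' : R => m r r'.1)
        = push Prod.fst (m r) := by
      intro r
      calc push (fun r' : R => r'.1.1) (fun r' : R => m r r'.1)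
          = push Prod.fst (push (fun r' : R => (r' : X × Y)) (fun r' : R => m r r'.1)) :=
            (push_comp _ Prod.fst _ (hefin r)).symm
        _ = push Prod.fst (m r) := by rw [hpush r]
    have hcomp2 : ∀ r : R, push (fun r' : R => r'.1.2) (fun r' : R => m r r'.1)
        = push Prod.snd (m r) := by
      intro r
      calc push (fun r' : R => r'.1.2) (fun r' : R => m r r'.1)
          = push Prod.snd (push (fun r' : R => (r' : X × Y)) (fun r' : R => m r r'.1)) :=
            (push_comp _ Prod.snd _ (hefin r)).symm
        _ = push Prod.snd (m r) := by rw [hpush r]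
    refine ⟨fun r r' => m r r'.1, ?_, ?_, ?_⟩
    · intro r
      refine ⟨hefin r, fun r' => ?_, ?_⟩
      · have := hpsd r r'.1.1 r'.1.2
        rwa [Prod.mk.eta] at this
      · have htot : ∑ᶠ r' : R, m r r'.1 = ∑ᶠ x, c r.1.1 x := by
          have e2 : R ∩ Function.support (m r) = Set.univ ∩ Function.support (m r) := by
            ext p
            simp only [Set.mem_inter_iff, Set.mem_univ, true_and]
            exact ⟨fun h' => h'.2, fun h' => ⟨hsupp' r h', h'⟩⟩
          calc ∑ᶠ r' : R, m r (r' : X × Y)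
              = ∑ᶠ p ∈ R, m r p := finsum_set_coe_eq_finsum_mem R
            _ = ∑ᶠ p ∈ R ∩ Function.support (m r), m r p :=
                (finsum_mem_inter_support _ _).symm
            _ = ∑ᶠ p ∈ Set.univ ∩ Function.support (m r), m r p := by rw [e2]
            _ = ∑ᶠ p, m r p := by rw [finsum_mem_inter_support, finsum_mem_univ]
            _ = ∑ᶠ x, ∑ᶠ y, m r (x, y) := finsum_curry _ (hfin r)
            _ = ∑ᶠ x, c r.1.1 x := finsum_congr (hmx r)
        rw [htot]
        exact (hc r.1.1).2.2
    · intro r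
      funext x
      rw [hcomp1 r, ← slice_fst, hmx r x]
    · intro r
      funext y
      rw [hcomp2 r, ← slice_snd, hmy r y]
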